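/- If the calibration equations Σ_{i=1}^N δ_i·ω_i = N and Σ_{i=1}^N δ_i·ω_i·b_i = Σ_{i=1}^N b_i hold (equality in ℝ^L for the second), and if β₀ ∈ ℝ and β ∈ ℝ^L satisfy the weighted residual equation Σ_{i=1}^N δ_i·exp(λ₀ + ⟨λ₁, b_i⟩)·(y_i − β₀ − ⟨β, b_i⟩) = 0, then the smoothed propensity-score estimator coincides with the regression imputation estimator: (1/N)·Σ_{i=1}^N δ_i·ω_i·y_i = (1/N)·Σ_{i=1}^N ( δ_i·y_i + (1 − δ_i)·(β₀ + ⟨β, b_i⟩) ). (Paper's algebraic identity (26)–(28).) -/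

import Mathlib

open Finset

/-- **Paper's algebraic identity (26)–(28).** If the smoothed propensity weights
`ω_i = 1 + (N₀/N₁)·exp(λ₀ + ⟨λ₁, bᵢ⟩)` satisfy the calibration equations
`Σ δᵢωᵢ = N` and `Σ δᵢωᵢbᵢ = Σ bᵢ`, and `(β₀, β)` solves the weighted residual
equation, then the smoothed PS estimator equals the regression imputation estimator. -/
theorem stmt_6
    {N L : ℕ} (hN : 1 ≤ N)
    (δ : Fin N → ℝ) (hδ : ∀ i, δ i = 0 ∨ δ i = 1)
    (y : Fin N → ℝ) (b : Fin N → EuclideanSpace ℝ (Fin L))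
    (N₁ : ℝ) (hN₁_def : N₁ = ∑ i, δ i) (hN₁_pos : 0 < N₁)
    (N₀ : ℝ) (hN₀_def : N₀ = (N : ℝ) - N₁)
    (lam0 : ℝ) (lam1 : EuclideanSpace ℝ (Fin L))
    (w : Fin N → ℝ)
    (hw : ∀ i, w i = 1 + (N₀ / N₁) * Real.exp (lam0 + (inner ℝ lam1 (b i) : ℝ)))
    (hcal1 : ∑ i, δ i * w i = (N : ℝ))
    (hcal2 : ∑ i, (δ i * w i) • b i = ∑ i, b i)
    (β₀ : ℝ) (β : EuclideanSpace ℝ (Fin L))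
    (hres : ∑ i, δ i * Real.exp (lam0 + (inner ℝ lam1 (b i) : ℝ)) *
        (y i - β₀ - (inner ℝ β (b i) : ℝ)) = 0) :
    (1 / (N : ℝ)) * ∑ i, δ i * w i * y i
      = (1 / (N : ℝ)) * ∑ i, (δ i * y i + (1 - δ i) * (β₀ + (inner ℝ β (b i) : ℝ))) := by
  set E : Fin N → ℝ := fun i => Real.exp (lam0 + (inner ℝ lam1 (b i) : ℝ)) with hE
  set P : Fin N → ℝ := fun i => (inner ℝ β (b i) : ℝ) with hP
  set c : ℝ := N₀ / N₁ with hc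
  -- inner product of hcal2 with β
  have h1 : ∑ i, δ i * w i * P i = ∑ i, P i := by
    have := congrArg (fun v => (inner ℝ β v : ℝ)) hcal2
    simpa [inner_sum, real_inner_smul_right, hP, Finset.mul_sum, mul_comm, mul_assoc, mul_left_comm] using this
  -- residual equation rearranged
  have hres' : ∑ i, δ i * E i * y i = ∑ i, δ i * E i * (β₀ + P i) := by
    rw [← sub_eq_zero, ← Finset.sum_sub_distrib, ← hres]
    exact Finset.sum_congr rfl fun i _ => by ring
  -- expand w
  have hw1 : ∑ i, δ i * w i * y i
      = ∑ i, δ i * y i + c * ∑ i, δ i * E i * y i := by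
    rw [Finset.mul_sum, ← Finset.sum_add_distrib]
    exact Finset.sum_congr rfl fun i _ => by rw [hw i]; ring
  have hw2 : ∑ i, δ i * w i * (β₀ + P i)
      = ∑ i, δ i * (β₀ + P i) + c * ∑ i, δ i * E i * (β₀ + P i) := by
    rw [Finset.mul_sum, ← Finset.sum_add_distrib]
    exact Finset.sum_congr rfl fun i _ => by rw [hw i]; ring
  -- calibration for β₀ + P i
  have h2 : ∑ i, δ i * w i * (β₀ + P i) = ∑ i, (β₀ + P i) := by
    have hb0 : ∑ i, δ i * w i * β₀ = ∑ i : Fin N, β₀ := by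
      rw [← Finset.sum_mul, hcal1, Finset.sum_const, Finset.card_univ,
        Fintype.card_fin, nsmul_eq_mul, mul_comm]
    calc ∑ i, δ i * w i * (β₀ + P i)
        = ∑ i, (δ i * w i * β₀ + δ i * w i * P i) :=
          Finset.sum_congr rfl fun i _ => by ring
      _ = ∑ i, δ i * w i * β₀ + ∑ i, δ i * w i * P i := Finset.sum_add_distrib
      _ = ∑ i : Fin N, β₀ + ∑ i, P i := by rw [hb0, h1]
      _ = ∑ i, (β₀ + P i) := Finset.sum_add_distrib.symm
  have key : c * ∑ i, δ i * E i * (β₀ + P i)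
      = ∑ i, (β₀ + P i) - ∑ i, δ i * (β₀ + P i) := by
    rw [← h2, hw2]; ring
  -- finish
  congr 1
  rw [hw1, hres', key]
  rw [show ∑ i, (δ i * y i + (1 - δ i) * (β₀ + P i))
      = ∑ i, δ i * y i + (∑ i, (β₀ + P i) - ∑ i, δ i * (β₀ + P i)) from ?_]
  · rw [Finset.sum_add_distrib, ← Finset.sum_sub_distrib]
    congr 1
    exact Finset.sum_congr rfl fun i _ => by ring
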